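/- Let K > 0, γ₀ > K, and 0 < d_m < 1 < d_M. If c₂ ∈ ℝ satisfies (K·d_M − γ₀)/(d_M − 1) ≤ c₂ ≤ (K·d_m − γ₀)/(d_m − 1) and c₁ = γ₀ − c₂, then for every d̃ ∈ [d_m, d_M] one has c₂ + c₁/d̃ ≥ K. -/
import Mathlib


/-- Core algebraic lemma in the proof of Theorem 3 of the paper: the constraints
`c₁ + c₂ = γ₀` and `(Kd_M - γ₀)/(d_M - 1) ≤ c₂ ≤ (Kd_m - γ₀)/(d_m - 1)`
guarantee that `c₂ + c₁/d̃ ≥ K` for every `d̃ ∈ [d_m, d_M]`. -/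
theorem stmt_13 (K γ₀ dm dM c₁ c₂ : ℝ)
    (hK : 0 < K) (hγ₀ : K < γ₀) (hdm : 0 < dm) (hdm1 : dm < 1) (hdM : 1 < dM)
    (hlo : (K * dM - γ₀) / (dM - 1) ≤ c₂) (hhi : c₂ ≤ (K * dm - γ₀) / (dm - 1))
    (hc₁ : c₁ = γ₀ - c₂) :
    ∀ d ∈ Set.Icc dm dM, K ≤ c₂ + c₁ / d := by
  intro d hd
  obtain ⟨h1, h2⟩ := hd
  have hd0 : 0 < d := lt_of_lt_of_le hdm h1
  have hM0 : 0 < dM - 1 := by linarith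
  have hm0 : dm - 1 < 0 := by linarith
  have hlo' : K * dM - γ₀ ≤ c₂ * (dM - 1) := (div_le_iff₀ hM0).mp hlo
  have hhi' : K * dm - γ₀ ≤ c₂ * (dm - 1) := by
    rw [le_div_iff_of_neg hm0] at hhi
    linarith
  have key : K * d - γ₀ ≤ c₂ * (d - 1) := by
    rcases le_or_gt d 1 with h | h
    · nlinarith
    · nlinarith
  rw [hc₁, ← sub_le_iff_le_add', le_div_iff₀ hd0]
  nlinarith [key]
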